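/- Let N ≥ 2, and suppose m ≤ s_i ≤ M for all i with 0 < m ≤ M, and 0 < cos α_i ≤ 1 for all i, with α_N = α_0. Then cos(α_0) · (G(0,N-1) − cos α_0 · G(1,N-1)) / G(0,N) > m · cos(α_0) / ((M+1)(2m+1)). -/

import Mathlib

/-- Auxiliary recursion: `Gaux s α j n` corresponds to `G(j, j-1+n)`. -/
noncomputable def Gaux (s α : ℤ → ℝ) (j : ℤ) : ℕ → ℝ
  | 0 => 0
  | 1 => 1
  | (n+2) => (2 * s (j + n) + Real.cos (α (j + n)) + Real.cos (α (j + n + 1))) * Gaux s α j (n+1)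
      - (Real.cos (α (j + n)))^2 * Gaux s α j n

/-- `G s α j k` is the recursively defined quantity `G(j,k)`, with `G(j,j-1)=0`, `G(j,j)=1`,
`G(j,k) = (2 s_{k-1} + cos α_{k-1} + cos α_k) G(j,k-1) − cos²(α_{k-1}) G(j,k-2)` for `k ≥ j+1`. -/
noncomputable def G (s α : ℤ → ℝ) (j k : ℤ) : ℝ := Gaux s α j (k - (j-1)).toNat

/-- `Pprod α a b = ∏_{i=a}^{b-1} cos (α i)`. -/
noncomputable def Pprod (α : ℤ → ℝ) (a b : ℤ) : ℝ := ∏ i ∈ Finset.Ico a b, Real.cos (α i)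

lemma Gaux_rec (s α : ℤ → ℝ) (j : ℤ) (n : ℕ) :
    Gaux s α j (n+2) = (2 * s (j + n) + Real.cos (α (j + n)) + Real.cos (α (j + n + 1))) * Gaux s α j (n+1)
      - (Real.cos (α (j + n)))^2 * Gaux s α j n := rfl

lemma GauxA_rec (s α : ℤ → ℝ) (n : ℕ) :
    Gaux s α 0 (n+2) = (2 * s n + Real.cos (α n) + Real.cos (α (n+1))) * Gaux s α 0 (n+1)
      - (Real.cos (α n))^2 * Gaux s α 0 n := by
  have := Gaux_rec s α 0 n
  push_cast at this ⊢
  simpa using this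

lemma GauxB_rec (s α : ℤ → ℝ) (n : ℕ) :
    Gaux s α 1 (n+2) = (2 * s (n+1) + Real.cos (α (n+1)) + Real.cos (α (n+2))) * Gaux s α 1 (n+1)
      - (Real.cos (α (n+1)))^2 * Gaux s α 1 n := by
  have := Gaux_rec s α 1 n
  push_cast at this ⊢
  have e1 : (1 : ℤ) + n + 1 = n + 2 := by ring
  have e0 : (1 : ℤ) + n = n + 1 := by ring
  rw [e1, e0] at this
  exact this

lemma aux_a (s α : ℤ → ℝ) (hs : ∀ i, 0 < s i) (hα : ∀ i : ℤ, 0 < Real.cos (α i)) :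
    ∀ n : ℕ, 0 < Gaux s α 0 (n+1) ∧
      Real.cos (α (n+1)) * Gaux s α 0 (n+1) < Gaux s α 0 (n+2) := by
  intro n
  induction n with
  | zero =>
    have h1 : Gaux s α 0 1 = 1 := rfl
    have h0 : Gaux s α 0 0 = 0 := rfl
    have h2 := GauxA_rec s α 0
    rw [h0, h1] at h2
    push_cast at h2 ⊢
    rw [h1, h2]
    refine ⟨one_pos, ?_⟩
    have := hs 0; have := hα 0
    nlinarith
  | succ n ih =>
    obtain ⟨h1, h2⟩ := ih
    have hp2 : 0 < Gaux s α 0 (n+2) := lt_trans (mul_pos (hα _) h1) h2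
    refine ⟨hp2, ?_⟩
    have hrec := GauxA_rec s α (n+1)
    have hs1 := hs ((n:ℤ)+1)
    have hc1 := hα ((n:ℤ)+1)
    have hc2 := hα ((n:ℤ)+2)
    push_cast at hrec ⊢
    have e : ((n:ℤ)+1+1) = (n:ℤ)+2 := by ring
    rw [e] at hrec ⊢
    nlinarith [mul_pos hs1 hp2, mul_pos hc2 hp2, mul_le_mul_of_nonneg_left h2.le hc1.le]

lemma aux_b (s α : ℤ → ℝ) (hs : ∀ i, 0 < s i) (hα : ∀ i : ℤ, 0 < Real.cos (α i)) :
    ∀ n : ℕ, 0 < Gaux s α 1 (n+1) ∧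
      Real.cos (α (n+2)) * Gaux s α 1 (n+1) < Gaux s α 1 (n+2) := by
  intro n
  induction n with
  | zero =>
    have h1 : Gaux s α 1 1 = 1 := rfl
    have h0 : Gaux s α 1 0 = 0 := rfl
    have h2 := GauxB_rec s α 0
    rw [h0, h1] at h2
    push_cast at h2 ⊢
    rw [h1, h2]
    refine ⟨one_pos, ?_⟩
    have := hs 1; have := hα 1
    nlinarith
  | succ n ih =>
    obtain ⟨h1, h2⟩ := ih
    have hp2 : 0 < Gaux s α 1 (n+2) := lt_trans (mul_pos (hα _) h1) h2
    refine ⟨hp2, ?_⟩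
    have hrec := GauxB_rec s α (n+1)
    have hs1 := hs ((n:ℤ)+2)
    have hc1 := hα ((n:ℤ)+2)
    have hc2 := hα ((n:ℤ)+3)
    push_cast at hrec ⊢
    have e : ((n:ℤ)+1+1) = (n:ℤ)+2 := by ring
    have e' : ((n:ℤ)+1+2) = (n:ℤ)+3 := by ring
    rw [e, e'] at hrec
    rw [e'] at *
    nlinarith [mul_pos hs1 hp2, mul_pos hc2 hp2, mul_le_mul_of_nonneg_left h2.le hc1.le]

lemma aux_d (s α : ℤ → ℝ) (hs : ∀ i, 0 < s i) (hα : ∀ i : ℤ, 0 < Real.cos (α i)) :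
    ∀ n : ℕ, 0 < Gaux s α 0 (n+2) - (2 * s 0 + Real.cos (α 0)) * Gaux s α 1 (n+1) ∧
      Real.cos (α (n+1)) * (Gaux s α 0 (n+1) - (2 * s 0 + Real.cos (α 0)) * Gaux s α 1 n)
        ≤ Gaux s α 0 (n+2) - (2 * s 0 + Real.cos (α 0)) * Gaux s α 1 (n+1) := by
  intro n
  induction n with
  | zero =>
    have ha0 : Gaux s α 0 0 = 0 := rfl
    have ha1 : Gaux s α 0 1 = 1 := rfl
    have hb0 : Gaux s α 1 0 = 0 := rfl
    have hb1 : Gaux s α 1 1 = 1 := rfl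
    have ha2 := GauxA_rec s α 0
    rw [ha0, ha1] at ha2
    push_cast at ha2 ⊢
    rw [ha2, ha1, hb0, hb1]
    constructor
    · have := hα 1; nlinarith
    · nlinarith [hα 1]
  | succ n ih =>
    obtain ⟨h1, h2⟩ := ih
    have hrecA := GauxA_rec s α (n+1)
    have hrecB := GauxB_rec s α n
    have hs1 := hs ((n:ℤ)+1)
    have hc1 := hα ((n:ℤ)+1)
    have hc2 := hα ((n:ℤ)+2)
    push_cast at hrecA hrecB ⊢
    have e : ((n:ℤ)+1+1) = (n:ℤ)+2 := by ring
    rw [e] at hrecA ⊢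
    simp only [show n+1+1 = n+2 from rfl, show n+1+2 = n+3 from rfl] at hrecA ⊢
    have key : Gaux s α 0 (n+3) - (2 * s 0 + Real.cos (α 0)) * Gaux s α 1 (n+2)
        = (2 * s ((n:ℤ)+1) + Real.cos (α ((n:ℤ)+1)) + Real.cos (α ((n:ℤ)+2)))
            * (Gaux s α 0 (n+2) - (2 * s 0 + Real.cos (α 0)) * Gaux s α 1 (n+1))
          - (Real.cos (α ((n:ℤ)+1)))^2
            * (Gaux s α 0 (n+1) - (2 * s 0 + Real.cos (α 0)) * Gaux s α 1 n) := by
      rw [hrecA, hrecB]; ring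
    constructor
    · nlinarith [mul_pos hs1 h1, mul_pos hc2 h1, mul_le_mul_of_nonneg_left h2 hc1.le]
    · nlinarith [mul_pos hs1 h1, mul_pos hc2 h1, mul_le_mul_of_nonneg_left h2 hc1.le]

theorem stmt16 (s α : ℤ → ℝ) (N : ℤ) (hN : 2 ≤ N) (hper : α N = α 0)
    (m M : ℝ) (hm : 0 < m) (hmM : m ≤ M)
    (hsm : ∀ i, m ≤ s i) (hsM : ∀ i, s i ≤ M)
    (hα : ∀ i, 0 < Real.cos (α i)) (hα' : ∀ i, Real.cos (α i) ≤ 1) :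
    Real.cos (α 0) * (G s α 0 (N-1) - Real.cos (α 0) * G s α 1 (N-1)) / G s α 0 N
      > m * Real.cos (α 0) / ((M + 1) * (2 * m + 1)) := by
  have hs : ∀ i, 0 < s i := fun i => lt_of_lt_of_le hm (hsm i)
  set n0 : ℕ := (N-2).toNat with hn0def
  have hn0 : (n0:ℤ) = N - 2 := by omega
  have hGN : G s α 0 N = Gaux s α 0 (n0+3) := by
    unfold G; congr 1; omega
  have hGN1 : G s α 0 (N-1) = Gaux s α 0 (n0+2) := by
    unfold G; congr 1; omega
  have hGN1' : G s α 1 (N-1) = Gaux s α 1 (n0+1) := by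
    unfold G; congr 1; omega
  rw [hGN, hGN1, hGN1']
  have ha1 : 0 < Gaux s α 0 (n0+1) := (aux_a s α hs hα n0).1
  have ha2 : 0 < Gaux s α 0 (n0+2) := (aux_a s α hs hα (n0+1)).1
  have ha3 : 0 < Gaux s α 0 (n0+3) := (aux_a s α hs hα (n0+2)).1
  have hb1 : 0 < Gaux s α 1 (n0+1) := (aux_b s α hs hα n0).1
  have hd := (aux_d s α hs hα n0).1
  have hc0 := hα 0
  have hc0' := hα' 0
  -- Inequality 1 : Gaux 0 (n0+3) < (2M+2) * Gaux 0 (n0+2)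
  have hrecA := GauxA_rec s α (n0+1)
  push_cast at hrecA
  simp only [show n0+1+1 = n0+2 from rfl, show n0+1+2 = n0+3 from rfl] at hrecA
  have hbound : Gaux s α 0 (n0+3) < (2*M+2) * Gaux s α 0 (n0+2) := by
    have h1 := hsM ((n0:ℤ)+1)
    have h2 := hα' ((n0:ℤ)+1)
    have h3 := hα' ((n0:ℤ)+1+1)
    nlinarith [mul_pos (pow_pos (hα ((n0:ℤ)+1)) 2) ha1,
      mul_nonneg (show (0:ℝ) ≤ 2*M+2 - (2 * s ((n0:ℤ)+1) + Real.cos (α ((n0:ℤ)+1))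
        + Real.cos (α ((n0:ℤ)+1+1))) by linarith) ha2.le]
  -- Inequality 2 : 2 m a2 < (2m+1)(a2 - c0 b1)
  have hE : 2 * m * Gaux s α 0 (n0+2)
      < (2*m+1) * (Gaux s α 0 (n0+2) - Real.cos (α 0) * Gaux s α 1 (n0+1)) := by
    have hs0 := hsm 0
    nlinarith [hd, mul_pos hm hb1,
      mul_nonneg (sub_nonneg.2 (hsm 0)) hb1.le,
      mul_nonneg (mul_nonneg hm.le (sub_nonneg.2 hc0')) hb1.le]
  have hMpos : (0:ℝ) < M + 1 := by linarith
  have hfin : m * Real.cos (α 0) * Gaux s α 0 (n0+3)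
      < Real.cos (α 0) * (Gaux s α 0 (n0+2) - Real.cos (α 0) * Gaux s α 1 (n0+1))
        * ((M+1) * (2*m+1)) := by
    have t1 : m * Real.cos (α 0) * Gaux s α 0 (n0+3)
        < m * Real.cos (α 0) * ((2*M+2) * Gaux s α 0 (n0+2)) :=
      mul_lt_mul_of_pos_left hbound (mul_pos hm hc0)
    have t2 : (Real.cos (α 0) * (M+1)) * (2 * m * Gaux s α 0 (n0+2))
        < (Real.cos (α 0) * (M+1)) * ((2*m+1) * (Gaux s α 0 (n0+2)
            - Real.cos (α 0) * Gaux s α 1 (n0+1))) :=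
      mul_lt_mul_of_pos_left hE (mul_pos hc0 hMpos)
    nlinarith [t1, t2]
  rw [gt_iff_lt, div_lt_div_iff₀ (by positivity) ha3]
  linarith [hfin]
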